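/- Let (r,a,c) and (s,b,d) be two rank one data. Then the cokernel of ∂ : C^0 → C^1 is a finite-dimensional F-vector space, and dim_F coker ∂ = dim_F ker ∂ + Σ_{i=0}^{f−1} #{ j ∈ Z : 0 ≤ j < r_i and j ≡ r_i + c_i − d_i (mod m) }. (In the paper's formulation: dim_F Ext^1(M(r,a,c), M(s,b,d)) = Δ + Σ_{i=0}^{f−1} #{ j ∈ [0, r_i) : j ≡ r_i + c_i − d_i (mod e(K'/K)) }, where Δ = dim_F Hom(M(r,a,c), M(s,b,d)).) -/

import Mathlib

open PowerSeries

noncomputable section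

/-- The map `φ : Σ αₙ uⁿ ↦ Σ αₙ u^{p·n}` on `F⟦u⟧`. -/
noncomputable def phiPS (p : ℕ) (F : Type) [CommRing F] :
    PowerSeries F →ₗ[F] PowerSeries F where
  toFun g := PowerSeries.mk fun n => if p ∣ n then PowerSeries.coeff (n / p) g else 0
  map_add' g h := by
    ext n
    by_cases hn : p ∣ n <;> simp [PowerSeries.coeff_mk, hn]
  map_smul' t g := by
    ext n
    by_cases hn : p ∣ n <;> simp [PowerSeries.coeff_mk, hn]

/-- The space of tuples `(μ_i)_{i ∈ ℤ/f}` of power series such that every nonzero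
coefficient of `μ_i` occurs in a degree `n` with `n ≡ γ i (mod m)`. -/
def Ctuples (F : Type) [Field F] (f m : ℕ) (γ : ZMod f → ZMod m) :
    Submodule F (ZMod f → PowerSeries F) where
  carrier := {μ | ∀ (i : ZMod f) (n : ℕ), PowerSeries.coeff n (μ i) ≠ 0 → (n : ZMod m) = γ i}
  add_mem' := by
    intro μ ν hμ hν i n hn
    rw [Pi.add_apply, map_add] at hn
    by_cases h1 : PowerSeries.coeff n (μ i) = 0
    · refine hν i n fun h2 => hn ?_
      rw [h1, h2, add_zero]
    · exact hμ i n h1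
  zero_mem' := by
    intro i n hn
    simp at hn
  smul_mem' := by
    intro t μ hμ i n hn
    refine hμ i n fun h => hn ?_
    rw [Pi.smul_apply, map_smul, h, smul_zero]

/-- The map `∂ : (μ_i)_i ↦ (−a_i u^{r_i} μ_i + b_i u^{s_i} φ(μ_{i−1}))_i`. -/
noncomputable def Dmap (p : ℕ) (F : Type) [Field F] (f : ℕ) (r s : ZMod f → ℕ)
    (a b : ZMod f → Fˣ) :
    (ZMod f → PowerSeries F) →ₗ[F] (ZMod f → PowerSeries F) :=
  LinearMap.pi fun i =>
    (LinearMap.mulLeft F (PowerSeries.C (b i : F) * PowerSeries.X ^ s i)).comp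
        ((phiPS p F).comp (LinearMap.proj (i - 1)))
      - (LinearMap.mulLeft F (PowerSeries.C (a i : F) * PowerSeries.X ^ r i)).comp
        (LinearMap.proj i)

/-! ### Auxiliary material -/

section Aux

open Submodule LinearMap Module

variable {F : Type} [Field F] {f m : ℕ}

/- coefficient computations -/

lemma coeff_phiPS (p : ℕ) (g : PowerSeries F) (t : ℕ) :
    coeff t (phiPS p F g) = if p ∣ t then coeff (t / p) g else 0 := by
  simp [phiPS, coeff_mk]

lemma coeff_CXpow_mul (α : F) (k t : ℕ) (g : PowerSeries F) :
    coeff t (PowerSeries.C α * PowerSeries.X ^ k * g) =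
      if k ≤ t then α * coeff (t - k) g else 0 := by
  rw [show PowerSeries.C α * PowerSeries.X ^ k * g
      = PowerSeries.C α * (g * PowerSeries.X ^ k) by ring,
    coeff_C_mul, coeff_mul_X_pow']
  split_ifs <;> simp

lemma coeff_Dmap (p : ℕ) (r s : ZMod f → ℕ) (a b : ZMod f → Fˣ)
    (μ : ZMod f → PowerSeries F) (i : ZMod f) (t : ℕ) :
    coeff t (Dmap p F f r s a b μ i) =
      (if s i ≤ t ∧ p ∣ (t - s i) then (b i : F) * coeff ((t - s i) / p) (μ (i - 1)) else 0)
      - (if r i ≤ t then (a i : F) * coeff (t - r i) (μ i) else 0) := by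
  simp only [Dmap, LinearMap.pi_apply, LinearMap.sub_apply, LinearMap.comp_apply,
    LinearMap.mulLeft_apply, LinearMap.proj_apply, map_sub, coeff_CXpow_mul, coeff_phiPS]
  congr 1
  split_ifs with h1 h2 h3 <;> simp_all [mul_ite]

/- abstract Fredholm transfer -/

lemma fredholm_transfer {M M' : Type} [AddCommGroup M] [Module F M]
    [AddCommGroup M'] [Module F M'] (g : M →ₗ[F] M') (A : Submodule F M) (B : Submodule F M')
    (hAB : A ≤ Submodule.comap g B)
    (hinj : ∀ x ∈ A, g x = 0 → x = 0)
    (hsurj : ∀ y ∈ B, ∃ x ∈ A, g x = y)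
    (h0 : FiniteDimensional F (M ⧸ A)) (h1 : FiniteDimensional F (M' ⧸ B)) :
    FiniteDimensional F (M' ⧸ LinearMap.range g) ∧ FiniteDimensional F (LinearMap.ker g) ∧
      finrank F (M' ⧸ LinearMap.range g) + finrank F (M ⧸ A)
        = finrank F (LinearMap.ker g) + finrank F (M' ⧸ B) := by
  set gbar := Submodule.mapQ A B g hAB with hgbar
  have hBle : B ≤ LinearMap.range g := fun y hy => by
    obtain ⟨x, _, hx⟩ := hsurj y hy; exact ⟨x, hx⟩
  have hrange : LinearMap.range gbar = (LinearMap.range g).map B.mkQ := by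
    ext w
    constructor
    · rintro ⟨v, rfl⟩
      obtain ⟨x, rfl⟩ := A.mkQ_surjective v
      exact ⟨g x, ⟨x, rfl⟩, (Submodule.mapQ_apply _ _ _ _).symm⟩
    · rintro ⟨y, ⟨x, rfl⟩, rfl⟩
      exact ⟨A.mkQ x, (Submodule.mapQ_apply _ _ _ _)⟩
  have ecoker : (M' ⧸ LinearMap.range g) ≃ₗ[F] ((M' ⧸ B) ⧸ LinearMap.range gbar) := by
    refine LinearEquiv.symm ?_
    refine (Submodule.quotEquivOfEq _ _ hrange).trans
      (Submodule.quotientQuotientEquivQuotient B (LinearMap.range g) hBle)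
  have eker : (LinearMap.ker g) ≃ₗ[F] (LinearMap.ker gbar) := by
    refine LinearEquiv.ofBijective
      (LinearMap.codRestrict (LinearMap.ker gbar) ((A.mkQ).comp (LinearMap.ker g).subtype)
        (fun x => by
          rw [LinearMap.mem_ker]
          simp only [LinearMap.comp_apply, Submodule.subtype_apply, Submodule.mkQ_apply]
          rw [hgbar, Submodule.mapQ_apply]
          simp [LinearMap.map_coe_ker])) ⟨?_, ?_⟩
    · intro x y hxy
      have hxy' : A.mkQ x.1 = A.mkQ y.1 := congrArg Subtype.val hxy
      have : (x.1 - y.1 : M) ∈ A := by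
        rw [Submodule.mkQ_apply, Submodule.mkQ_apply] at hxy'
        rwa [Submodule.Quotient.eq] at hxy'
      have hz : g (x.1 - y.1) = 0 := by
        rw [map_sub, LinearMap.map_coe_ker, LinearMap.map_coe_ker, sub_zero]
      have := hinj _ this hz
      exact Subtype.ext (sub_eq_zero.mp this)
    · rintro ⟨w, hw⟩
      obtain ⟨v, rfl⟩ := A.mkQ_surjective w
      have : g v ∈ B := by
        rw [LinearMap.mem_ker, hgbar, Submodule.mkQ_apply, Submodule.mapQ_apply,
          Submodule.Quotient.mk_eq_zero] at hw
        exact hw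
      obtain ⟨x, hxA, hgx⟩ := hsurj (g v) this
      refine ⟨⟨v - x, by rw [LinearMap.mem_ker, map_sub, hgx, sub_self]⟩, ?_⟩
      apply Subtype.ext
      simp only [LinearMap.codRestrict_apply, LinearMap.comp_apply, Submodule.subtype_apply,
        Submodule.mkQ_apply]
      rw [Submodule.Quotient.eq]
      simpa using A.neg_mem hxA
  have fk : FiniteDimensional F (LinearMap.ker g) :=
    LinearEquiv.finiteDimensional eker.symm
  have fc : FiniteDimensional F (M' ⧸ LinearMap.range g) :=
    LinearEquiv.finiteDimensional ecoker.symm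
  refine ⟨fc, fk, ?_⟩
  have e1 : finrank F ((M' ⧸ B) ⧸ LinearMap.range gbar) + finrank F (LinearMap.range gbar)
      = finrank F (M' ⧸ B) := Submodule.finrank_quotient_add_finrank _
  have e2 : finrank F (LinearMap.range gbar) + finrank F (LinearMap.ker gbar)
      = finrank F (M ⧸ A) := LinearMap.finrank_range_add_finrank_ker gbar
  rw [ecoker.finrank_eq, eker.finrank_eq]
  omega

lemma fredholm_ambient {M M' : Type} [AddCommGroup M] [Module F M]
    [AddCommGroup M'] [Module F M'] (D : M →ₗ[F] M') (C0 : Submodule F M) (C1 : Submodule F M')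
    (A0 : Submodule F M) (A1 : Submodule F M')
    (hDC : ∀ x ∈ C0, D x ∈ C1)
    (hDA : ∀ x, x ∈ C0 → x ∈ A0 → D x ∈ A1)
    (hinj : ∀ x ∈ A0, D x = 0 → x = 0)
    (hsurj : ∀ y, y ∈ A1 → y ∈ C1 → ∃ x, x ∈ A0 ∧ x ∈ C0 ∧ D x = y)
    (h0 : FiniteDimensional F (C0 ⧸ Submodule.comap C0.subtype A0))
    (h1 : FiniteDimensional F (C1 ⧸ Submodule.comap C1.subtype A1)) :
    FiniteDimensional F (C1 ⧸ Submodule.comap C1.subtype (Submodule.map D C0)) ∧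
    FiniteDimensional F (Submodule.comap C0.subtype (LinearMap.ker D)) ∧
      finrank F (C1 ⧸ Submodule.comap C1.subtype (Submodule.map D C0))
          + finrank F (C0 ⧸ Submodule.comap C0.subtype A0)
        = finrank F (Submodule.comap C0.subtype (LinearMap.ker D))
          + finrank F (C1 ⧸ Submodule.comap C1.subtype A1) := by
  set g : C0 →ₗ[F] C1 := D.restrict hDC with hg
  have hIm : Submodule.comap C1.subtype (Submodule.map D C0) = LinearMap.range g := by
    ext y
    simp only [Submodule.mem_comap, Submodule.mem_map, LinearMap.mem_range,
      Submodule.subtype_apply]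
    constructor
    · rintro ⟨x, hx, hxy⟩
      exact ⟨⟨x, hx⟩, Subtype.ext (by simpa [hg, LinearMap.restrict_apply] using hxy)⟩
    · rintro ⟨x, rfl⟩
      exact ⟨x.1, x.2, by simp [hg, LinearMap.restrict_apply]⟩
  have hKr : Submodule.comap C0.subtype (LinearMap.ker D) = LinearMap.ker g := by
    ext x
    simp only [Submodule.mem_comap, LinearMap.mem_ker, Submodule.subtype_apply]
    constructor
    · intro hx
      exact Subtype.ext (by simpa [hg, LinearMap.restrict_apply] using hx)
    · intro hx
      have := congrArg Subtype.val hx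
      simpa [hg, LinearMap.restrict_apply] using this
  rw [hIm, hKr]
  refine fredholm_transfer g (Submodule.comap C0.subtype A0) (Submodule.comap C1.subtype A1)
    ?_ ?_ ?_ h0 h1
  · intro x hx
    simp only [Submodule.mem_comap, Submodule.subtype_apply] at hx ⊢
    simpa [hg, LinearMap.restrict_apply] using hDA _ x.2 hx
  · intro x hx hgx
    simp only [Submodule.mem_comap, Submodule.subtype_apply] at hx
    have : D x.1 = 0 := by
      have := congrArg Subtype.val hgx
      simpa [hg, LinearMap.restrict_apply] using this
    exact Subtype.ext (hinj _ hx this)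
  · intro y hy
    simp only [Submodule.mem_comap, Submodule.subtype_apply] at hy
    obtain ⟨x, hxA, hxC, hDx⟩ := hsurj y.1 hy y.2
    exact ⟨⟨x, hxC⟩, by simpa [Submodule.mem_comap] using hxA,
      Subtype.ext (by simpa [hg, LinearMap.restrict_apply] using hDx)⟩

/- truncation dimension -/

/-- tuples vanishing in degrees `< B i`. -/
def lowT (F : Type) [Field F] (f : ℕ) (B : ZMod f → ℕ) :
    Submodule F (ZMod f → PowerSeries F) where
  carrier := {μ | ∀ i, ∀ n < B i, PowerSeries.coeff n (μ i) = 0}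
  add_mem' := fun hμ hν i n hn => by
    rw [Pi.add_apply, map_add, hμ i n hn, hν i n hn, add_zero]
  zero_mem' := fun i n _ => by simp
  smul_mem' := fun t μ hμ i n hn => by
    rw [Pi.smul_apply, map_smul, hμ i n hn, smul_zero]

lemma trunc_quotient_finrank [NeZero f] (γ : ZMod f → ZMod m) (B : ZMod f → ℕ) :
    FiniteDimensional F
      ((Ctuples F f m γ) ⧸ Submodule.comap (Ctuples F f m γ).subtype (lowT F f B)) ∧
    finrank F ((Ctuples F f m γ) ⧸ Submodule.comap (Ctuples F f m γ).subtype (lowT F f B))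
      = ∑ i : ZMod f, ((Finset.range (B i)).filter fun n : ℕ => ((n : ℕ) : ZMod m) = γ i).card := by
  classical
  set T := fun i : ZMod f => ((Finset.range (B i)).filter fun n : ℕ => ((n : ℕ) : ZMod m) = γ i)
  set τ : (Ctuples F f m γ) →ₗ[F] ((i : ZMod f) → (T i → F)) :=
    { toFun := fun μ i n => PowerSeries.coeff n.1 (μ.1 i)
      map_add' := fun μ ν => by funext i n; simp
      map_smul' := fun t μ => by funext i n; simp } with hτ
  have hker : LinearMap.ker τ = Submodule.comap (Ctuples F f m γ).subtype (lowT F f B) := by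
    ext μ
    simp only [LinearMap.mem_ker, Submodule.mem_comap, Submodule.subtype_apply]
    constructor
    · intro h i n hn
      by_cases hcong : ((n : ℕ) : ZMod m) = γ i
      · have : τ μ i ⟨n, by simp [T, Finset.mem_filter, Finset.mem_range, hn, hcong]⟩ = 0 := by
          rw [h]; rfl
        simpa [hτ] using this
      · by_contra hne
        exact hcong (μ.2 i n hne)
    · intro h
      funext i n
      have := h i n.1
        (by have := n.2; simp only [T, Finset.mem_filter, Finset.mem_range] at this; exact this.1)
      simpa [hτ] using this
  have hsurj : Function.Surjective τ := by
    intro v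
    refine ⟨⟨fun i => PowerSeries.mk fun n =>
      if h : n ∈ T i then v i ⟨n, h⟩ else 0, ?_⟩, ?_⟩
    · intro i n hn
      rw [PowerSeries.coeff_mk] at hn
      by_cases h : n ∈ T i
      · simp only [T, Finset.mem_filter] at h; exact h.2
      · simp [h] at hn
    · funext i n
      simp [hτ, PowerSeries.coeff_mk, n.2]
  have e := (LinearMap.quotKerEquivOfSurjective τ hsurj)
  rw [hker] at e
  constructor
  · exact LinearEquiv.finiteDimensional e.symm
  · rw [e.finrank_eq, Module.finrank_pi_fintype F]
    refine Finset.sum_congr rfl fun i _ => ?_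
    rw [Module.finrank_pi F, Fintype.card_coe]

/- counting -/

lemma count_split (m N R : ℕ) (g1 : ZMod m) :
    ((Finset.range (N + R)).filter fun n : ℕ => ((n : ℕ) : ZMod m) = g1).card
      = ((Finset.range N).filter fun n : ℕ => ((n : ℕ) : ZMod m) = g1 - (R : ZMod m)).card
        + ((Finset.range R).filter fun n : ℕ => ((n : ℕ) : ZMod m) = g1).card := by
  classical
  have hsplit : Finset.range (N + R) = Finset.range R ∪ Finset.Ico R (N + R) := by
    simp only [Finset.range_eq_Ico]
    exact (Finset.Ico_union_Ico_eq_Ico (Nat.zero_le R) (by omega)).symm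
  have hdisj : Disjoint ((Finset.range R).filter fun n : ℕ => ((n : ℕ) : ZMod m) = g1)
      ((Finset.Ico R (N + R)).filter fun n : ℕ => ((n : ℕ) : ZMod m) = g1) := by
    refine Finset.disjoint_filter_filter ?_
    rw [Finset.range_eq_Ico]
    exact Finset.Ico_disjoint_Ico_consecutive 0 R (N + R)
  have himg : ((Finset.range N).filter
        fun n : ℕ => ((n : ℕ) : ZMod m) = g1 - (R : ZMod m)).image (· + R)
      = (Finset.Ico R (N + R)).filter fun n : ℕ => ((n : ℕ) : ZMod m) = g1 := by
    ext t
    simp only [Finset.mem_image, Finset.mem_filter, Finset.mem_range, Finset.mem_Ico]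
    constructor
    · rintro ⟨n, ⟨hn, hcong⟩, rfl⟩
      refine ⟨⟨by omega, by omega⟩, ?_⟩
      push_cast
      rw [hcong]; ring
    · rintro ⟨⟨hR, hlt⟩, hcong⟩
      refine ⟨t - R, ⟨by omega, ?_⟩, by omega⟩
      rw [Nat.cast_sub hR, hcong]
  rw [hsplit, Finset.filter_union, Finset.card_union_of_disjoint hdisj, ← himg,
    Finset.card_image_of_injective _ (add_left_injective R)]
  ring

end Aux

noncomputable def solveCoeff (p : ℕ) {F : Type} [Field F] {f : ℕ} (N : ℕ)
    (r s : ZMod f → ℕ) (a b : ZMod f → Fˣ) (h : ZMod f → PowerSeries F) :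
    ℕ → ZMod f → F
  | n => fun i =>
    if N ≤ n then
      (a i : F)⁻¹ * ((b i : F) *
        (if hk : p ∣ (n + r i - s i) ∧ (n + r i - s i) / p < n then
          solveCoeff p N r s a b h ((n + r i - s i) / p) (i - 1) else 0)
        - PowerSeries.coeff (n + r i) (h i))
    else 0
termination_by n => n
decreasing_by exact hk.2

section SC
variable {F : Type} [Field F] {f : ℕ}

lemma solveCoeff_def (p : ℕ) (N : ℕ) (r s : ZMod f → ℕ) (a b : ZMod f → Fˣ)
    (h : ZMod f → PowerSeries F) (n : ℕ) (i : ZMod f) :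
    solveCoeff p N r s a b h n i =
      if N ≤ n then
        (a i : F)⁻¹ * ((b i : F) *
          (if p ∣ (n + r i - s i) ∧ (n + r i - s i) / p < n then
            solveCoeff p N r s a b h ((n + r i - s i) / p) (i - 1) else 0)
          - PowerSeries.coeff (n + r i) (h i))
      else 0 := by
  rw [solveCoeff]
  simp only []
  congr 1

lemma solveCoeff_low (p : ℕ) (N : ℕ) (r s : ZMod f → ℕ) (a b : ZMod f → Fˣ)
    (h : ZMod f → PowerSeries F) (n : ℕ) (i : ZMod f) (hn : n < N) :
    solveCoeff p N r s a b h n i = 0 := by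
  rw [solveCoeff_def, if_neg (Nat.not_le.mpr hn)]
end SC


section Analytic

open Submodule LinearMap Module

variable {F : Type} [Field F] {f m : ℕ}

lemma div_lt_of_le' {p n K : ℕ} (hp2 : 2 ≤ p) (hK : K ≤ 2 * n - 1) (hn : 1 ≤ n) :
    K / p < n := by
  have h0 : 0 < p := by omega
  rw [Nat.div_lt_iff_lt_mul h0]
  have h1 : 2 * n ≤ p * n := Nat.mul_le_mul_right n hp2
  have h2 : p * n = n * p := Nat.mul_comm p n
  omega

lemma Dmap_mem_Ctuples [NeZero f] (p : ℕ) (r s : ZMod f → ℕ) (a b : ZMod f → Fˣ)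
    (c d : ZMod f → ZMod m)
    (hc : ∀ i, (p : ZMod m) * c (i - 1) = c i + (r i : ZMod m))
    (hd : ∀ i, (p : ZMod m) * d (i - 1) = d i + (s i : ZMod m))
    (μ : ZMod f → PowerSeries F) (hμ : μ ∈ Ctuples F f m fun i => c i - d i) :
    Dmap p F f r s a b μ ∈ Ctuples F f m fun i => (r i : ZMod m) + (c i - d i) := by
  intro i t ht
  rw [coeff_Dmap] at ht
  by_cases hT2 : (if r i ≤ t then (a i : F) * coeff (t - r i) (μ i) else 0) = 0
  · -- then T1 ≠ 0
    rw [hT2, sub_zero] at ht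
    by_cases hcond : s i ≤ t ∧ p ∣ (t - s i)
    · rw [if_pos hcond] at ht
      have hco : coeff ((t - s i) / p) (μ (i - 1)) ≠ 0 := fun h0 => ht (by rw [h0, mul_zero])
      have hcong := hμ (i - 1) _ hco
      have hpk : p * ((t - s i) / p) = t - s i := Nat.mul_div_cancel' hcond.2
      have hc2 : ((t - s i : ℕ) : ZMod m)
          = (p : ZMod m) * (((t - s i) / p : ℕ) : ZMod m) := by
        conv_lhs => rw [← hpk]
        push_cast
        ring
      have hcast : (t : ZMod m) - (s i : ZMod m)
          = (p : ZMod m) * (((t - s i) / p : ℕ) : ZMod m) := by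
        rw [← Nat.cast_sub hcond.1, hc2]
      linear_combination hcast + (p : ZMod m) * hcong + hc i - hd i
    · rw [if_neg hcond] at ht
      exact absurd rfl ht
  · by_cases hrt : r i ≤ t
    · rw [if_pos hrt] at hT2
      have hco : coeff (t - r i) (μ i) ≠ 0 := fun h0 => hT2 (by rw [h0, mul_zero])
      have hcong := hμ i _ hco
      rw [Nat.cast_sub hrt] at hcong
      linear_combination hcong
    · exact absurd (if_neg hrt) hT2

lemma Dmap_mem_lowT (p e' N : ℕ) (hp2 : 2 ≤ p) (hN : N = e' + 1)
    (r s : ZMod f → ℕ) (hre : ∀ i, r i ≤ e') (hse : ∀ i, s i ≤ e')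
    (a b : ZMod f → Fˣ) (μ : ZMod f → PowerSeries F)
    (hμ : μ ∈ lowT F f fun _ => N) :
    Dmap p F f r s a b μ ∈ lowT F f fun i => N + r i := by
  intro i t ht
  have ht' : t < N + r i := ht
  rw [coeff_Dmap]
  have hT2 : (if r i ≤ t then (a i : F) * coeff (t - r i) (μ i) else 0) = 0 := by
    split_ifs with hrt
    · rw [hμ i (t - r i) (by omega : t - r i < N), mul_zero]
    · rfl
  have hT1 : (if s i ≤ t ∧ p ∣ (t - s i) then
      (b i : F) * coeff ((t - s i) / p) (μ (i - 1)) else 0) = 0 := by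
    split_ifs with hcond
    · rw [hμ (i - 1) ((t - s i) / p)
        (div_lt_of_le' hp2 (by have := hre i; omega) (by omega) : (t - s i) / p < N),
        mul_zero]
    · rfl
  rw [hT1, hT2, sub_zero]

lemma Dmap_inj (p e' N : ℕ) (hp2 : 2 ≤ p) (hN : N = e' + 1)
    (r s : ZMod f → ℕ) (hre : ∀ i, r i ≤ e') (hse : ∀ i, s i ≤ e')
    (a b : ZMod f → Fˣ) (μ : ZMod f → PowerSeries F)
    (hμ : μ ∈ lowT F f fun _ => N) (hD : Dmap p F f r s a b μ = 0) :
    μ = 0 := by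
  have key : ∀ t : ℕ, ∀ i, coeff t (μ i) = 0 := by
    intro t
    induction t using Nat.strong_induction_on with
    | _ t IH =>
      intro i
      by_cases hlow : t < N
      · exact hμ i t hlow
      · have h0 : coeff (t + r i) (Dmap p F f r s a b μ i) = 0 := by
          rw [hD]; simp
        rw [coeff_Dmap] at h0
        have hT1 : (if s i ≤ t + r i ∧ p ∣ (t + r i - s i) then
            (b i : F) * coeff ((t + r i - s i) / p) (μ (i - 1)) else 0) = 0 := by
          split_ifs with hcond
          · rw [IH ((t + r i - s i) / p)
              (div_lt_of_le' hp2 (by have := hre i; omega) (by omega)) (i - 1), mul_zero]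
          · rfl
        rw [hT1, if_pos (Nat.le_add_left _ _), Nat.add_sub_cancel, zero_sub,
          neg_eq_zero] at h0
        rcases mul_eq_zero.mp h0 with h | h
        · exact absurd h (Units.ne_zero (a i))
        · exact h
  funext i
  exact PowerSeries.ext fun t => by rw [key t i]; simp

lemma solveCoeff_congr [NeZero f] (p e' N : ℕ) (hp2 : 2 ≤ p) (hN : N = e' + 1)
    (r s : ZMod f → ℕ) (hre : ∀ i, r i ≤ e') (hse : ∀ i, s i ≤ e')
    (a b : ZMod f → Fˣ) (c d : ZMod f → ZMod m)
    (hc : ∀ i, (p : ZMod m) * c (i - 1) = c i + (r i : ZMod m))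
    (hd : ∀ i, (p : ZMod m) * d (i - 1) = d i + (s i : ZMod m))
    (h : ZMod f → PowerSeries F)
    (hh : h ∈ Ctuples F f m fun i => (r i : ZMod m) + (c i - d i)) :
    ∀ n (i : ZMod f), ((n : ℕ) : ZMod m) ≠ c i - d i → solveCoeff p N r s a b h n i = 0 := by
  intro n
  induction n using Nat.strong_induction_on with
  | _ n IH =>
    intro i hne
    rw [solveCoeff_def]
    have hcoeff : N ≤ n → coeff (n + r i) (h i) = 0 := by
      intro _
      by_contra hne2
      have hx := hh i (n + r i) hne2
      push_cast at hx
      exact hne (by linear_combination hx)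
    split_ifs with hNn hcond
    · have hrec : solveCoeff p N r s a b h ((n + r i - s i) / p) (i - 1) = 0 := by
        apply IH _ hcond.2
        intro hkc
        apply hne
        have hpk : p * ((n + r i - s i) / p) = n + r i - s i := Nat.mul_div_cancel' hcond.1
        have hc2 : ((n + r i - s i : ℕ) : ZMod m)
            = (p : ZMod m) * (((n + r i - s i) / p : ℕ) : ZMod m) := by
          conv_lhs => rw [← hpk]
          push_cast
          ring
        have hcast : (n : ZMod m) + (r i : ZMod m) - (s i : ZMod m)
            = (p : ZMod m) * (((n + r i - s i) / p : ℕ) : ZMod m) := by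
          rw [← hc2, Nat.cast_sub (by have := hse i; omega : s i ≤ n + r i)]
          push_cast
          ring
        linear_combination hcast + (p : ZMod m) * hkc + hc i - hd i
      rw [hrec, mul_zero, hcoeff hNn, sub_zero, mul_zero]
    · rw [mul_zero, hcoeff hNn, sub_zero, mul_zero]
    · rfl

lemma Dmap_surj [NeZero f] (p e' N : ℕ) (hp2 : 2 ≤ p) (hN : N = e' + 1)
    (r s : ZMod f → ℕ) (hre : ∀ i, r i ≤ e') (hse : ∀ i, s i ≤ e')
    (a b : ZMod f → Fˣ) (c d : ZMod f → ZMod m)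
    (hc : ∀ i, (p : ZMod m) * c (i - 1) = c i + (r i : ZMod m))
    (hd : ∀ i, (p : ZMod m) * d (i - 1) = d i + (s i : ZMod m))
    (h : ZMod f → PowerSeries F)
    (hh1 : h ∈ Ctuples F f m fun i => (r i : ZMod m) + (c i - d i))
    (hh2 : h ∈ lowT F f fun i => N + r i) :
    ∃ μ, μ ∈ lowT F f (fun _ => N) ∧ μ ∈ Ctuples F f m (fun i => c i - d i) ∧
      Dmap p F f r s a b μ = h := by
  set μ : ZMod f → PowerSeries F :=
    fun i => PowerSeries.mk fun n => solveCoeff p N r s a b h n i with hμdef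
  have hcoeffμ : ∀ (n : ℕ) (i : ZMod f),
      coeff n (μ i) = solveCoeff p N r s a b h n i := fun n i => by
    simp [hμdef, coeff_mk]
  refine ⟨μ, ?_, ?_, ?_⟩
  · intro i n hn
    rw [hcoeffμ, solveCoeff_low _ _ _ _ _ _ _ _ _ hn]
  · intro i n hne
    by_contra hcong
    exact hne (by
      rw [hcoeffμ]
      exact solveCoeff_congr p e' N hp2 hN r s hre hse a b c d hc hd h hh1 n i hcong)
  · funext i
    apply PowerSeries.ext
    intro t
    rw [coeff_Dmap]
    by_cases hbig : N + r i ≤ t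
    · obtain ⟨n, rfl⟩ : ∃ n, t = n + r i := ⟨t - r i, by omega⟩
      have hNn : N ≤ n := by omega
      have hkn : (n + r i - s i) / p < n :=
        div_lt_of_le' hp2 (by have := hre i; omega) (by omega)
      have h2 : (if r i ≤ n + r i then (a i : F) * coeff (n + r i - r i) (μ i) else 0)
          = (a i : F) * solveCoeff p N r s a b h n i := by
        rw [if_pos (Nat.le_add_left _ _), Nat.add_sub_cancel, hcoeffμ]
      have h1 : (if s i ≤ n + r i ∧ p ∣ (n + r i - s i) then
            (b i : F) * coeff ((n + r i - s i) / p) (μ (i - 1)) else 0)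
          = (b i : F) * (if p ∣ (n + r i - s i) ∧ (n + r i - s i) / p < n then
              solveCoeff p N r s a b h ((n + r i - s i) / p) (i - 1) else 0) := by
        have hst : s i ≤ n + r i := by have := hse i; omega
        by_cases hdvd : p ∣ (n + r i - s i)
        · rw [if_pos ⟨hst, hdvd⟩, if_pos ⟨hdvd, hkn⟩, hcoeffμ]
        · rw [if_neg (fun hcon => hdvd hcon.2), if_neg (fun hcon => hdvd hcon.1), mul_zero]
      rw [h1, h2, solveCoeff_def p N r s a b h n i, if_pos hNn]
      have ha : (a i : F) ≠ 0 := Units.ne_zero _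
      field_simp
      ring
    · have hrhs : coeff t (h i) = 0 := hh2 i t (by omega : t < N + r i)
      have hT2 : (if r i ≤ t then (a i : F) * coeff (t - r i) (μ i) else 0) = 0 := by
        split_ifs with hrt
        · rw [hcoeffμ, solveCoeff_low _ _ _ _ _ _ _ _ _ (by omega : t - r i < N), mul_zero]
        · rfl
      have hT1 : (if s i ≤ t ∧ p ∣ (t - s i) then
          (b i : F) * coeff ((t - s i) / p) (μ (i - 1)) else 0) = 0 := by
        split_ifs with hcond
        · rw [hcoeffμ, solveCoeff_low _ _ _ _ _ _ _ _ _
            (div_lt_of_le' hp2 (by have := hre i; omega) (by omega)), mul_zero]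
        · rfl
      rw [hT1, hT2, hrhs, sub_zero]

end Analytic

end

/-- For two rank one data `(r,a,c)` and `(s,b,d)`, the cokernel of
`∂ : C⁰ → C¹` is finite-dimensional over `F`, of dimension
`dim ker ∂ + Σ_i #{0 ≤ j < r_i : j ≡ r_i + c_i − d_i (mod m)}`.  (By the paper, `ker ∂`
computes `Hom(𝔐(r,a,c), 𝔐(s,b,d))` and `coker ∂` computes `Ext¹(𝔐(r,a,c), 𝔐(s,b,d))`.) -/
theorem statement_11
    (p : ℕ) (hp : p.Prime) (F : Type) [Field F] [Fintype F] [CharP F p]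
    (f e m : ℕ) [NeZero f] (he : 1 ≤ e) (hm1 : 1 ≤ m) (hm : p ^ f - 1 ∣ m)
    (e' : ℕ) (he' : e' = e * m)
    (r : ZMod f → ℕ) (a : ZMod f → Fˣ) (c : ZMod f → ZMod m)
    (hr : ∀ i, r i ≤ e') (hc : ∀ i, (p : ZMod m) * c (i - 1) = c i + (r i : ZMod m))
    (s : ZMod f → ℕ) (b : ZMod f → Fˣ) (d : ZMod f → ZMod m)
    (hs : ∀ i, s i ≤ e') (hd : ∀ i, (p : ZMod m) * d (i - 1) = d i + (s i : ZMod m)) :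
    let C0 := Ctuples F f m fun i => c i - d i
    let C1 := Ctuples F f m fun i => (r i : ZMod m) + (c i - d i)
    let D := Dmap p F f r s a b
    let Im : Submodule F ↥C1 := Submodule.comap C1.subtype (Submodule.map D C0)
    let Kr : Submodule F ↥C0 := Submodule.comap C0.subtype (LinearMap.ker D)
    FiniteDimensional F (↥C1 ⧸ Im) ∧ FiniteDimensional F ↥Kr ∧
      Module.finrank F (↥C1 ⧸ Im) =
        Module.finrank F ↥Kr +
          ∑ i : ZMod f,
            ((Finset.range (r i)).filter
              fun j : ℕ => ((j : ℕ) : ZMod m) = (r i : ZMod m) + (c i - d i)).card := by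
  intro C0 C1 D Im Kr
  have hp2 : 2 ≤ p := hp.two_le
  have he'1 : 1 ≤ e' := by
    rw [he']
    calc 1 = 1 * 1 := (one_mul 1).symm
    _ ≤ e * m := Nat.mul_le_mul he hm1
  set N : ℕ := e' + 1 with hN
  obtain ⟨fd0, hq0⟩ :=
    trunc_quotient_finrank (F := F) (fun i => c i - d i) (fun _ : ZMod f => N)
  obtain ⟨fd1, hq1⟩ :=
    trunc_quotient_finrank (F := F)
      (fun i => (r i : ZMod m) + (c i - d i)) (fun i : ZMod f => N + r i)
  obtain ⟨H1, H2, H3⟩ :=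
    fredholm_ambient D C0 C1 (lowT F f fun _ => N) (lowT F f fun i => N + r i)
      (fun x hx => Dmap_mem_Ctuples p r s a b c d hc hd x hx)
      (fun x _ hx => Dmap_mem_lowT p e' N hp2 rfl r s hr hs a b x hx)
      (fun x hx hDx => Dmap_inj p e' N hp2 rfl r s hr hs a b x hx hDx)
      (fun y hy1 hy2 => Dmap_surj p e' N hp2 rfl r s hr hs a b c d hc hd y hy2 hy1)
      fd0 fd1
  refine ⟨H1, H2, ?_⟩
  have hcount : ∀ i : ZMod f,
      ((Finset.range (N + r i)).filter
          fun n : ℕ => ((n : ℕ) : ZMod m) = (r i : ZMod m) + (c i - d i)).card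
        = ((Finset.range N).filter fun n : ℕ => ((n : ℕ) : ZMod m) = c i - d i).card
          + ((Finset.range (r i)).filter
              fun n : ℕ => ((n : ℕ) : ZMod m) = (r i : ZMod m) + (c i - d i)).card := by
    intro i
    have hx := count_split m N (r i) ((r i : ZMod m) + (c i - d i))
    have hgd : (r i : ZMod m) + (c i - d i) - (r i : ZMod m) = c i - d i := by ring
    rw [hgd] at hx
    exact hx
  have hsum : (∑ i : ZMod f, ((Finset.range (N + r i)).filter
        fun n : ℕ => ((n : ℕ) : ZMod m) = (r i : ZMod m) + (c i - d i)).card)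
      = (∑ i : ZMod f, ((Finset.range N).filter
          fun n : ℕ => ((n : ℕ) : ZMod m) = c i - d i).card)
        + ∑ i : ZMod f, ((Finset.range (r i)).filter
            fun n : ℕ => ((n : ℕ) : ZMod m) = (r i : ZMod m) + (c i - d i)).card := by
    rw [← Finset.sum_add_distrib]
    exact Finset.sum_congr rfl fun i _ => hcount i
  rw [hq0, hq1, hsum] at H3
  have hIm2 : Im = Submodule.comap C1.subtype (Submodule.map D C0) := rfl
  have hKr2 : Kr = Submodule.comap C0.subtype (LinearMap.ker D) := rfl
  rw [hIm2, hKr2]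
  omega
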